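/- Let w, w_* : ℝᵈ × ℝᵈ → ℝ be ℤᵈ-periodic in ξ, compactly supported in x inside a bounded set Q, with Δ_ξ w_*(x, ξ) = w(x, ξ), and with w_* in C¹ in x and C² in ξ with continuous mixed derivatives ∂²w_*/∂x_j ∂ξ_j. Then for every ε > 0: ∫_Q w(x, x/ε) dx = -ε ∫_Q Σ_{j=1}^{d} (∂² w_* / ∂x_j ∂ξ_j)(x, x/ε) dx. -/

import Mathlib

open MeasureTheory

/-- The identity behind the averaging lemma: if `Δ_ξ w_*(x,ξ) = w(x,ξ)` with
`w_*` compactly supported in `x` inside `Q`, then for every `ε > 0`,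
`∫_Q w(x, x/ε) dx = -ε ∫_Q Σ_j ∂²w_*/∂x_j∂ξ_j (x, x/ε) dx`. -/
theorem stmt7 (d : ℕ) (hd : 1 ≤ d) (Q : Set (Fin d → ℝ))
    (hQb : Bornology.IsBounded Q) (hQm : MeasurableSet Q)
    (w wstar : (Fin d → ℝ) → (Fin d → ℝ) → ℝ)
    (hsmooth : ContDiff ℝ 2 (Function.uncurry wstar))
    (hcontw : Continuous (Function.uncurry w))
    (hperw : ∀ (x ξ : Fin d → ℝ) (k : Fin d → ℤ),
      w x (ξ + fun i => (k i : ℝ)) = w x ξ)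
    (hperstar : ∀ (x ξ : Fin d → ℝ) (k : Fin d → ℤ),
      wstar x (ξ + fun i => (k i : ℝ)) = wstar x ξ)
    (hK : ∃ K : Set (Fin d → ℝ), IsCompact K ∧ K ⊆ Q ∧
      ∀ ξ : Fin d → ℝ, Function.support (fun x => wstar x ξ) ⊆ K)
    (hlap : ∀ x ξ : Fin d → ℝ,
      (∑ j : Fin d, fderiv ℝ (fun η => fderiv ℝ (fun η' => wstar x η') η
        (Pi.single j 1)) ξ (Pi.single j 1)) = w x ξ)
    (hmixedcont : ∀ j : Fin d, Continuous (Function.uncurry fun x ξ =>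
      fderiv ℝ (fun y => fderiv ℝ (fun η => wstar y η) ξ (Pi.single j 1)) x
        (Pi.single j 1))) :
    ∀ ε : ℝ, 0 < ε →
      ∫ x in Q, w x (ε⁻¹ • x) =
        -(ε * ∫ x in Q, ∑ j : Fin d,
          fderiv ℝ (fun y => fderiv ℝ (fun η => wstar y η) (ε⁻¹ • x)
            (Pi.single j 1)) x (Pi.single j 1)) := by
  classical
  obtain ⟨K, hKc, hKQ, hKsupp⟩ := hK
  intro ε hε
  set e : Fin d → (Fin d → ℝ) := fun j => Pi.single j 1 with he
  -- basic facts about wstar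
  have hwz : ∀ x ∉ K, ∀ ξ, wstar x ξ = 0 := by
    intro x hx ξ
    by_contra h
    exact hx (hKsupp ξ h)
  set A := fderiv ℝ (Function.uncurry wstar) with hA
  have hsm1 : ContDiff ℝ 1 A := hsmooth.fderiv_right (by norm_num)
  have hdiffW : Differentiable ℝ (Function.uncurry wstar) :=
    hsmooth.differentiable (by norm_num)
  -- partial derivative in second slot
  have hpart : ∀ (x ξ : Fin d → ℝ), HasFDerivAt (fun η => wstar x η)
      ((A (x, ξ)).comp (ContinuousLinearMap.inr ℝ _ _)) ξ :=
    fun x ξ => (hdiffW (x, ξ)).hasFDerivAt.comp ξ (hasFDerivAt_prodMk_right x ξ)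
  have hDξ : ∀ (x ξ : Fin d → ℝ) (v : Fin d → ℝ),
      fderiv ℝ (fun η => wstar x η) ξ v = A (x, ξ) (0, v) := by
    intro x ξ v
    rw [(hpart x ξ).fderiv]
    rfl
  -- G j is C¹
  set G : Fin d → ((Fin d → ℝ) × (Fin d → ℝ)) → ℝ :=
    fun j p => A p (0, e j) with hGdef
  have hG : ∀ j, ContDiff ℝ 1 (G j) := fun j => hsm1.clm_apply contDiff_const
  have hGdiff : ∀ j, Differentiable ℝ (G j) := fun j => (hG j).differentiable one_ne_zero
  -- pure second derivative identity
  have hpure : ∀ (x ξ : Fin d → ℝ) (j : Fin d),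
      fderiv ℝ (fun η => fderiv ℝ (fun η' => wstar x η') η (e j)) ξ (e j)
        = fderiv ℝ (G j) (x, ξ) (0, e j) := by
    intro x ξ j
    have h0 : (fun η => fderiv ℝ (fun η' => wstar x η') η (e j)) =
        (fun η => G j (x, η)) := funext fun η => hDξ x η (e j)
    rw [h0]
    have h1 : HasFDerivAt (fun η : Fin d → ℝ => G j (x, η))
        ((fderiv ℝ (G j) (x, ξ)).comp (ContinuousLinearMap.inr ℝ _ _)) ξ :=
      ((hGdiff j (x, ξ)).hasFDerivAt).comp ξ (hasFDerivAt_prodMk_right x ξ)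
    rw [h1.fderiv]
    rfl
  -- mixed second derivative identity
  have hmixed : ∀ (x ξ : Fin d → ℝ) (j : Fin d),
      fderiv ℝ (fun y => fderiv ℝ (fun η => wstar y η) ξ (e j)) x (e j)
        = fderiv ℝ (G j) (x, ξ) (e j, 0) := by
    intro x ξ j
    have h0 : (fun y => fderiv ℝ (fun η => wstar y η) ξ (e j)) =
        (fun y => G j (y, ξ)) := funext fun y => hDξ y ξ (e j)
    rw [h0]
    have h1 : HasFDerivAt (fun y : Fin d → ℝ => G j (y, ξ))
        ((fderiv ℝ (G j) (x, ξ)).comp (ContinuousLinearMap.inl ℝ _ _)) x :=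
      by have := ((hGdiff j (x, ξ)).hasFDerivAt).comp x (hasFDerivAt_prodMk_left (𝕜 := ℝ) x ξ); exact this
    rw [h1.fderiv]
    rfl
  -- the vector field g j
  set L : (Fin d → ℝ) →L[ℝ] (Fin d → ℝ) × (Fin d → ℝ) :=
    (ContinuousLinearMap.id ℝ _).prod (ε⁻¹ • ContinuousLinearMap.id ℝ _) with hLdef
  have hLx : ∀ x : Fin d → ℝ, L x = (x, ε⁻¹ • x) := fun x => rfl
  set g : Fin d → (Fin d → ℝ) → ℝ := fun j x => G j (L x) with hgdef
  have hgC : ∀ j, ContDiff ℝ 1 (g j) := fun j => (hG j).comp L.contDiff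
  have hgderiv : ∀ (j : Fin d) (x : Fin d → ℝ), fderiv ℝ (g j) x (e j) =
      fderiv ℝ (G j) (L x) (e j, 0) + ε⁻¹ * fderiv ℝ (G j) (L x) (0, e j) := by
    intro j x
    have h1 : HasFDerivAt (g j) ((fderiv ℝ (G j) (L x)).comp L) x :=
      ((hGdiff j (L x)).hasFDerivAt).comp x L.hasFDerivAt
    rw [h1.fderiv]
    have h2 : L (e j) = (e j, 0) + ε⁻¹ • (0, e j) := by
      rw [hLx]; ext <;> simp
    simp only [ContinuousLinearMap.comp_apply, h2, map_add, _root_.map_smul, smul_eq_mul]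
  -- supports
  have hgz : ∀ j, ∀ x ∉ K, g j x = 0 := by
    intro j x hx
    have h0 : (fun η => wstar x η) = (fun _ => (0:ℝ)) := funext fun η => hwz x hx η
    have : g j x = fderiv ℝ (fun η => wstar x η) (ε⁻¹ • x) (e j) := (hDξ x _ (e j)).symm
    rw [this, h0, fderiv_fun_const]
    rfl
  have hgcs : ∀ j, HasCompactSupport (g j) := by
    intro j
    apply HasCompactSupport.of_support_subset_isCompact hKc
    intro x hx
    by_contra h
    exact hx (hgz j x h)
  -- integral of directional derivative of g j is zero
  have hkey : ∀ j : Fin d, ∫ x : Fin d → ℝ, fderiv ℝ (g j) x (e j) = 0 := by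
    intro j
    have hconst : Differentiable ℝ (fun _ : Fin d → ℝ => (1:ℝ)) := differentiable_const 1
    have hderivcont : Continuous (fun x => fderiv ℝ (g j) x (e j)) := by
      have := ((hgC j).fderiv_right (m := 0) (by norm_num)).continuous
      exact (ContinuousLinearMap.apply ℝ ℝ (e j)).continuous.comp this
    have hfg' : Integrable (fun x : Fin d → ℝ => (1:ℝ) * fderiv ℝ (g j) x (e j)) := by
      simp only [one_mul]
      exact hderivcont.integrable_of_hasCompactSupport ((hgcs j).fderiv_apply ℝ (e j))
    have hfg : Integrable (fun x : Fin d → ℝ => (1:ℝ) * g j x) := by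
      simp only [one_mul]
      exact (hgC j).continuous.integrable_of_hasCompactSupport (hgcs j)
    have hf'g : Integrable
        (fun x : Fin d → ℝ => fderiv ℝ (fun _ => (1:ℝ)) x (e j) * g j x) := by
      apply (integrable_zero _ _ _).congr
      filter_upwards with x
      simp [fderiv_const]
    have := integral_mul_fderiv_eq_neg_fderiv_mul_of_integrable hf'g hfg' hfg (fun x _ => hconst x)
      (fun x _ => (hgC j).differentiable one_ne_zero x)
    simp only [one_mul, fderiv_const] at this
    simpa using this
  -- pointwise identity
  have hpoint : ∀ x : Fin d → ℝ, ε * ∑ j : Fin d, fderiv ℝ (g j) x (e j)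
      = w x (ε⁻¹ • x) + ε * ∑ j : Fin d,
          fderiv ℝ (fun y => fderiv ℝ (fun η => wstar y η) (ε⁻¹ • x)
            (Pi.single j 1)) x (Pi.single j 1) := by
    intro x
    have h1 : ∀ j : Fin d, ε * fderiv ℝ (g j) x (e j) =
        ε * fderiv ℝ (G j) (L x) (e j, 0) + fderiv ℝ (G j) (L x) (0, e j) := by
      intro j
      rw [hgderiv j x, mul_add, ← mul_assoc, mul_inv_cancel₀ hε.ne', one_mul]
    have h2 : ∀ j : Fin d, fderiv ℝ (G j) (L x) (0, e j) =
        fderiv ℝ (fun η => fderiv ℝ (fun η' => wstar x η') η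
          (Pi.single j 1)) (ε⁻¹ • x) (Pi.single j 1) := fun j =>
      (hpure x (ε⁻¹ • x) j).symm
    have h3 : ∀ j : Fin d, fderiv ℝ (G j) (L x) (e j, 0) =
        fderiv ℝ (fun y => fderiv ℝ (fun η => wstar y η) (ε⁻¹ • x)
          (Pi.single j 1)) x (Pi.single j 1) := fun j =>
      (hmixed x (ε⁻¹ • x) j).symm
    calc ε * ∑ j : Fin d, fderiv ℝ (g j) x (e j)
        = ∑ j : Fin d, (ε * fderiv ℝ (G j) (L x) (e j, 0)
            + fderiv ℝ (G j) (L x) (0, e j)) := by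
          rw [Finset.mul_sum]; exact Finset.sum_congr rfl fun j _ => h1 j
      _ = (∑ j : Fin d, fderiv ℝ (G j) (L x) (0, e j))
            + ε * ∑ j : Fin d, fderiv ℝ (G j) (L x) (e j, 0) := by
          rw [Finset.sum_add_distrib, Finset.mul_sum, add_comm]
      _ = _ := by
          congr 1
          · simp only [h2]; exact hlap x (ε⁻¹ • x)
          · congr 1; exact Finset.sum_congr rfl fun j _ => h3 j
  -- supports of the two integrands
  have hF1z : ∀ x ∉ K, w x (ε⁻¹ • x) = 0 := by
    intro x hx
    rw [← hlap x (ε⁻¹ • x)]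
    have h0 : (fun η' => wstar x η') = (fun _ => (0:ℝ)) := funext fun η => hwz x hx η
    apply Finset.sum_eq_zero
    intro j _
    have : (fun η => fderiv ℝ (fun η' => wstar x η') η (Pi.single j 1))
        = (fun _ : Fin d → ℝ => (0:ℝ)) := by
      funext η
      rw [h0, fderiv_fun_const]
      rfl
    rw [this, fderiv_fun_const]
    rfl
  have hKclosed := hKc.isClosed
  have hF2z : ∀ x ∉ K, ∀ (ξ : Fin d → ℝ) (j : Fin d),
      fderiv ℝ (fun y => fderiv ℝ (fun η => wstar y η) ξ (Pi.single j 1)) x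
        (Pi.single j 1) = 0 := by
    intro x hx ξ j
    have hnhds : Kᶜ ∈ nhds x := hKclosed.isOpen_compl.mem_nhds hx
    have hev : (fun y => fderiv ℝ (fun η => wstar y η) ξ (Pi.single j 1))
        =ᶠ[nhds x] (fun _ => (0:ℝ)) := by
      filter_upwards [hnhds] with y hy
      have h0 : (fun η => wstar y η) = (fun _ => (0:ℝ)) := funext fun η => hwz y hy η
      rw [h0, fderiv_fun_const]
      rfl
    rw [hev.fderiv_eq, fderiv_fun_const]
    rfl
  -- continuity and integrability of the two integrands
  have hcont1 : Continuous (fun x : Fin d → ℝ => w x (ε⁻¹ • x)) :=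
    hcontw.comp (continuous_id.prodMk ((continuous_const (y := ε⁻¹)).smul continuous_id))
  have hint1 : Integrable (fun x : Fin d → ℝ => w x (ε⁻¹ • x)) :=
    hcont1.integrable_of_hasCompactSupport
      (HasCompactSupport.of_support_subset_isCompact hKc (by
        intro x hx
        by_contra h
        exact hx (hF1z x h)))
  have hcont2 : ∀ j : Fin d, Continuous (fun x : Fin d → ℝ =>
      fderiv ℝ (fun y => fderiv ℝ (fun η => wstar y η) (ε⁻¹ • x)
        (Pi.single j 1)) x (Pi.single j 1)) := by
    intro j
    exact (hmixedcont j).comp (continuous_id.prodMk ((continuous_const (y := ε⁻¹)).smul continuous_id))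
  have hint2 : ∀ j : Fin d, Integrable (fun x : Fin d → ℝ =>
      fderiv ℝ (fun y => fderiv ℝ (fun η => wstar y η) (ε⁻¹ • x)
        (Pi.single j 1)) x (Pi.single j 1)) := by
    intro j
    apply (hcont2 j).integrable_of_hasCompactSupport
    apply HasCompactSupport.of_support_subset_isCompact hKc
    intro x hx
    by_contra h
    exact hx (hF2z x h (ε⁻¹ • x) j)
  have hint2' : Integrable (fun x : Fin d → ℝ => ∑ j : Fin d,
      fderiv ℝ (fun y => fderiv ℝ (fun η => wstar y η) (ε⁻¹ • x)
        (Pi.single j 1)) x (Pi.single j 1)) :=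
    integrable_finset_sum _ (fun j _ => hint2 j)
  -- reduce set integrals to full integrals
  have hset1 : ∫ x in Q, w x (ε⁻¹ • x) = ∫ x : Fin d → ℝ, w x (ε⁻¹ • x) :=
    setIntegral_eq_integral_of_forall_compl_eq_zero
      (fun x hx => hF1z x (fun hk => hx (hKQ hk)))
  have hset2 : (∫ x in Q, ∑ j : Fin d,
      fderiv ℝ (fun y => fderiv ℝ (fun η => wstar y η) (ε⁻¹ • x)
        (Pi.single j 1)) x (Pi.single j 1))
      = ∫ x : Fin d → ℝ, ∑ j : Fin d,
      fderiv ℝ (fun y => fderiv ℝ (fun η => wstar y η) (ε⁻¹ • x)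
        (Pi.single j 1)) x (Pi.single j 1) :=
    setIntegral_eq_integral_of_forall_compl_eq_zero
      (fun x hx => Finset.sum_eq_zero fun j _ =>
        hF2z x (fun hk => hx (hKQ hk)) (ε⁻¹ • x) j)
  rw [hset1, hset2]
  -- now combine
  have hzero : ∫ x : Fin d → ℝ, ε * ∑ j : Fin d, fderiv ℝ (g j) x (e j) = 0 := by
    rw [integral_const_mul]
    have : ∫ x : Fin d → ℝ, ∑ j : Fin d, fderiv ℝ (g j) x (e j) = 0 := by
      rw [integral_finset_sum]
      · exact Finset.sum_eq_zero fun j _ => hkey j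
      · intro j _
        have hderivcont : Continuous (fun x => fderiv ℝ (g j) x (e j)) := by
          have := ((hgC j).fderiv_right (m := 0) (by norm_num)).continuous
          exact (ContinuousLinearMap.apply ℝ ℝ (e j)).continuous.comp this
        exact hderivcont.integrable_of_hasCompactSupport ((hgcs j).fderiv_apply ℝ (e j))
    rw [this, mul_zero]
  have hsplit : ∫ x : Fin d → ℝ, ε * ∑ j : Fin d, fderiv ℝ (g j) x (e j)
      = (∫ x : Fin d → ℝ, w x (ε⁻¹ • x)) + ε * ∫ x : Fin d → ℝ, ∑ j : Fin d,
          fderiv ℝ (fun y => fderiv ℝ (fun η => wstar y η) (ε⁻¹ • x)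
            (Pi.single j 1)) x (Pi.single j 1) := by
    rw [← integral_const_mul, ← integral_add hint1 (hint2'.const_mul ε)]
    exact integral_congr_ae (Filter.Eventually.of_forall hpoint)
  rw [hsplit] at hzero
  linarith
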